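/- Let α₁, β₁, α₂, β₂ ∈ ℝ with α_i ≤ β_i for i = 1,2, and let f₁, f₂ : (0,2) → ℝ with f₁ ∈ Q_{α₁,β₁} and f₂ ∈ Q_{α₂,β₂}. Then the pointwise product f₁·f₂ belongs to Q_{α₁+α₂, min(α₁+β₂, α₂+β₁)}. -/

import Mathlib

open Set

noncomputable section

/-- `P_{α,β}`: finite sums of real powers `t^{α_i}` on `(0,2)`, where integer exponents
exceed `α` and non-integer exponents exceed `β`. -/
def Pclass (α β : ℝ) : Set (ℝ → ℝ) :=
  { f | ∃ (n : ℕ) (a : Fin n → ℝ) (e : Fin n → ℝ),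
      (∀ i, (∃ z : ℤ, e i = (z : ℝ)) → α < e i) ∧
      (∀ i, (¬ ∃ z : ℤ, e i = (z : ℝ)) → β < e i) ∧
      (∀ t ∈ Set.Ioo (0 : ℝ) 2, f t = ∑ i, a i * t ^ (e i)) }

/-- `R_{γ'}`: functions that are `C^∞` on `(0,2)` and whose `m`-th derivatives are
`O(t^{γ'-m})` as `t ↓ 0`. -/
def Rclass (γ' : ℝ) : Set (ℝ → ℝ) :=
  { f | ContDiffOn ℝ (⊤ : ℕ∞) f (Set.Ioo (0 : ℝ) 2) ∧
      ∀ m : ℕ, ∃ C : ℝ, ∃ ε > (0 : ℝ), ∀ t ∈ Set.Ioo (0 : ℝ) (min ε 2),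
        |iteratedDerivWithin m f (Set.Ioo (0 : ℝ) 2) t| ≤ C * t ^ (γ' - m) }

/-- `Q_{α,β} = ∩_{γ'} (P_{α,β} + R_{γ'})` (as functions on `(0,2)`). -/
def Qclass (α β : ℝ) : Set (ℝ → ℝ) :=
  { f | ∀ γ' : ℝ, ∃ p ∈ Pclass α β, ∃ r ∈ Rclass γ',
      ∀ t ∈ Set.Ioo (0 : ℝ) 2, f t = p t + r t }

private lemma S_ud : UniqueDiffOn ℝ (Set.Ioo (0:ℝ) 2) := (isOpen_Ioo).uniqueDiffOn

lemma contDiffOn_rpow_Ioo (e : ℝ) :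
    ContDiffOn ℝ (⊤ : ℕ∞) (fun t : ℝ => t ^ e) (Set.Ioo (0:ℝ) 2) := fun _ ht =>
  (Real.contDiffAt_rpow_const_of_ne (ne_of_gt ht.1)).contDiffWithinAt

lemma iteratedDerivWithin_rpow (e : ℝ) (m : ℕ) :
    ∀ t ∈ Set.Ioo (0:ℝ) 2, iteratedDerivWithin m (fun t : ℝ => t ^ e) (Set.Ioo (0:ℝ) 2) t
      = (∏ k ∈ Finset.range m, (e - k)) * t ^ (e - m) := by
  induction m with
  | zero => intro t ht; simp
  | succ m ih =>
    intro t ht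
    rw [iteratedDerivWithin_succ,
      derivWithin_congr (fun y hy => ih y hy) (ih t ht),
      derivWithin_of_isOpen isOpen_Ioo ht]
    have h1 : HasDerivAt (fun y : ℝ => y ^ (e - m)) ((e - m) * t ^ (e - m - 1)) t :=
      Real.hasDerivAt_rpow_const (Or.inl (ne_of_gt ht.1))
    rw [(h1.const_mul (∏ k ∈ Finset.range m, (e - (k:ℝ)))).deriv, Finset.prod_range_succ]
    have he : e - (m:ℝ) - 1 = e - ((m+1 : ℕ) : ℝ) := by push_cast; ring
    rw [he]; ring

lemma single_mem_Rclass (a e : ℝ) : (fun t : ℝ => a * t ^ e) ∈ Rclass e := by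
  constructor
  · exact ContDiffOn.mul contDiffOn_const (contDiffOn_rpow_Ioo e)
  · intro m
    refine ⟨|a| * |∏ k ∈ Finset.range m, (e - (k:ℝ))|, 1, one_pos, fun t ht => ?_⟩
    have ht2 : t ∈ Set.Ioo (0:ℝ) 2 := ⟨ht.1, lt_of_lt_of_le ht.2 (min_le_right _ _)⟩
    rw [iteratedDerivWithin_const_mul ht2 S_ud a
        (((contDiffOn_rpow_Ioo e).of_le (by exact_mod_cast le_top : (m : WithTop ℕ∞) ≤ ((⊤ : ℕ∞) : WithTop ℕ∞))) t ht2),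
      iteratedDerivWithin_rpow e m t ht2]
    rw [abs_mul, abs_mul, abs_of_pos (Real.rpow_pos_of_pos ht.1 _)]
    exact le_of_eq (by ring)

lemma zero_mem_Rclass (γ : ℝ) : (fun _ : ℝ => (0:ℝ)) ∈ Rclass γ := by
  simpa only [zero_mul] using single_mem_Rclass 0 γ

lemma Rclass_mono {γ δ : ℝ} (h : γ ≤ δ) : Rclass δ ⊆ Rclass γ := by
  rintro f ⟨hs, hb⟩
  refine ⟨hs, fun m => ?_⟩
  obtain ⟨C, ε, hε, hC⟩ := hb m
  refine ⟨max C 0, min ε 1, lt_min hε one_pos, fun t ht => ?_⟩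
  have ht1 : t ≤ 1 :=
    le_of_lt (lt_of_lt_of_le ht.2 (le_trans (min_le_left _ _) (min_le_right _ _)))
  have htε : t ∈ Set.Ioo (0:ℝ) (min ε 2) :=
    ⟨ht.1, lt_of_lt_of_le ht.2 (min_le_min (min_le_left _ _) le_rfl)⟩
  calc |iteratedDerivWithin m f (Set.Ioo (0:ℝ) 2) t| ≤ C * t ^ (δ - m) := hC t htε
    _ ≤ max C 0 * t ^ (δ - m) := by
        apply mul_le_mul_of_nonneg_right (le_max_left _ _)
        exact le_of_lt (Real.rpow_pos_of_pos ht.1 _)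
    _ ≤ max C 0 * t ^ (γ - m) := by
        apply mul_le_mul_of_nonneg_left _ (le_max_right _ _)
        exact Real.rpow_le_rpow_of_exponent_ge ht.1 ht1 (by linarith)

lemma Rclass_add {γ : ℝ} {f g : ℝ → ℝ} (hf : f ∈ Rclass γ) (hg : g ∈ Rclass γ) :
    (fun t => f t + g t) ∈ Rclass γ := by
  refine ⟨hf.1.add hg.1, fun m => ?_⟩
  obtain ⟨C₁, ε₁, hε₁, h₁⟩ := hf.2 m
  obtain ⟨C₂, ε₂, hε₂, h₂⟩ := hg.2 m
  refine ⟨C₁ + C₂, min ε₁ ε₂, lt_min hε₁ hε₂, fun t ht => ?_⟩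
  have ht2 : t ∈ Set.Ioo (0:ℝ) 2 := ⟨ht.1, lt_of_lt_of_le ht.2 (min_le_right _ _)⟩
  have hadd : iteratedDerivWithin m (fun t => f t + g t) (Set.Ioo (0:ℝ) 2) t
      = iteratedDerivWithin m f (Set.Ioo (0:ℝ) 2) t
        + iteratedDerivWithin m g (Set.Ioo (0:ℝ) 2) t :=
    iteratedDerivWithin_add ht2 S_ud ((hf.1.of_le (by exact_mod_cast le_top : (m : WithTop ℕ∞) ≤ ((⊤ : ℕ∞) : WithTop ℕ∞))) t ht2)
      ((hg.1.of_le (by exact_mod_cast le_top : (m : WithTop ℕ∞) ≤ ((⊤ : ℕ∞) : WithTop ℕ∞))) t ht2)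
  rw [hadd]
  have ht₁ : t ∈ Set.Ioo (0:ℝ) (min ε₁ 2) :=
    ⟨ht.1, lt_of_lt_of_le ht.2 (min_le_min (min_le_left _ _) le_rfl)⟩
  have ht₂ : t ∈ Set.Ioo (0:ℝ) (min ε₂ 2) :=
    ⟨ht.1, lt_of_lt_of_le ht.2 (min_le_min (min_le_right _ _) le_rfl)⟩
  calc |_ + _| ≤ _ + _ := abs_add_le _ _
    _ ≤ C₁ * t ^ (γ - m) + C₂ * t ^ (γ - m) := add_le_add (h₁ t ht₁) (h₂ t ht₂)
    _ = (C₁ + C₂) * t ^ (γ - m) := by ring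

lemma Rclass_sum {γ : ℝ} {ι : Type*} (s : Finset ι) (g : ι → ℝ → ℝ)
    (h : ∀ i ∈ s, g i ∈ Rclass γ) : (fun t => ∑ i ∈ s, g i t) ∈ Rclass γ := by
  classical
  induction s using Finset.induction_on with
  | empty => simpa using zero_mem_Rclass γ
  | @insert i s hi ih =>
    simp only [Finset.sum_insert hi]
    exact Rclass_add (h i (Finset.mem_insert_self i s))
      (ih fun j hj => h j (Finset.mem_insert_of_mem hj))

set_option linter.unnecessarySeqFocus false in
lemma Rclass_mul {γ δ : ℝ} {f g : ℝ → ℝ} (hf : f ∈ Rclass γ) (hg : g ∈ Rclass δ) :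
    (fun t => f t * g t) ∈ Rclass (γ + δ) := by
  refine ⟨hf.1.mul hg.1, fun m => ?_⟩
  choose Cf εf hεf hCf using hf.2
  choose Cg εg hεg hCg using hg.2
  have hne : (Finset.range (m+1)).Nonempty := ⟨0, by simp⟩
  set ε : ℝ := (Finset.range (m+1)).inf' hne (fun i => min (εf i) (εg (m-i))) with hεdef
  have hεpos : 0 < ε := by
    rw [hεdef, Finset.lt_inf'_iff]
    exact fun i _ => lt_min (hεf i) (hεg (m-i))
  refine ⟨∑ i ∈ Finset.range (m+1), (m.choose i : ℝ) * max (Cf i) 0 * max (Cg (m-i)) 0,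
    ε, hεpos, fun t ht => ?_⟩
  have ht2 : t ∈ Set.Ioo (0:ℝ) 2 := ⟨ht.1, lt_of_lt_of_le ht.2 (min_le_right _ _)⟩
  have habs : |iteratedDerivWithin m (fun t => f t * g t) (Set.Ioo (0:ℝ) 2) t|
      = ‖iteratedFDerivWithin ℝ m (fun t => f t * g t) (Set.Ioo (0:ℝ) 2) t‖ := by
    rw [norm_iteratedFDerivWithin_eq_norm_iteratedDerivWithin, Real.norm_eq_abs]
  rw [habs]
  have key := norm_iteratedFDerivWithin_mul_le (𝕜 := ℝ) hf.1 hg.1 S_ud ht2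
    (by exact_mod_cast le_top : (m : WithTop ℕ∞) ≤ ((⊤ : ℕ∞) : WithTop ℕ∞))
  refine le_trans key ?_
  rw [Finset.sum_mul]
  refine Finset.sum_le_sum fun i hi => ?_
  have him : i ≤ m := Nat.lt_succ_iff.mp (Finset.mem_range.mp hi)
  have hbf : ‖iteratedFDerivWithin ℝ i f (Set.Ioo (0:ℝ) 2) t‖
      ≤ max (Cf i) 0 * t ^ (γ - i) := by
    rw [norm_iteratedFDerivWithin_eq_norm_iteratedDerivWithin, Real.norm_eq_abs]
    have hεi : ε ≤ εf i := le_trans (Finset.inf'_le _ hi) (min_le_left _ _)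
    exact le_trans (hCf i t ⟨ht.1, lt_of_lt_of_le ht.2 (min_le_min hεi le_rfl)⟩)
      (mul_le_mul_of_nonneg_right (le_max_left _ _)
        (le_of_lt (Real.rpow_pos_of_pos ht.1 _)))
  have hbg : ‖iteratedFDerivWithin ℝ (m-i) g (Set.Ioo (0:ℝ) 2) t‖
      ≤ max (Cg (m-i)) 0 * t ^ (δ - (m-i : ℕ)) := by
    rw [norm_iteratedFDerivWithin_eq_norm_iteratedDerivWithin, Real.norm_eq_abs]
    have hεi : ε ≤ εg (m-i) := le_trans (Finset.inf'_le _ hi) (min_le_right _ _)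
    exact le_trans (hCg (m-i) t ⟨ht.1, lt_of_lt_of_le ht.2 (min_le_min hεi le_rfl)⟩)
      (mul_le_mul_of_nonneg_right (le_max_left _ _)
        (le_of_lt (Real.rpow_pos_of_pos ht.1 _)))
  calc (m.choose i : ℝ) * ‖iteratedFDerivWithin ℝ i f (Set.Ioo (0:ℝ) 2) t‖
        * ‖iteratedFDerivWithin ℝ (m-i) g (Set.Ioo (0:ℝ) 2) t‖
      ≤ (m.choose i : ℝ) * (max (Cf i) 0 * t ^ (γ - i))
        * (max (Cg (m-i)) 0 * t ^ (δ - (m-i : ℕ))) := by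
        gcongr (m.choose i : ℝ) * ?_ * ?_ <;> first
          | exact hbf
          | exact hbg
          | positivity
          | exact mul_nonneg (by positivity)
              (mul_nonneg (le_max_right _ _) (le_of_lt (Real.rpow_pos_of_pos ht.1 _)))
    _ = (m.choose i : ℝ) * max (Cf i) 0 * max (Cg (m-i)) 0 * t ^ (γ + δ - m) := by
        have hc : ((m - i : ℕ) : ℝ) = (m:ℝ) - i := Nat.cast_sub him
        have hrw : t ^ (γ - i) * t ^ (δ - ((m:ℝ) - i)) = t ^ (γ + δ - m) := by
          rw [← Real.rpow_add ht.1]; congr 1; ring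
        rw [hc, ← hrw]; ring

/-- product rule for `Q`: if `f_i ∈ Q_{α_i,β_i}` with `α_i ≤ β_i`, then
`f₁·f₂ ∈ Q_{α₁+α₂, min(α₁+β₂, α₂+β₁)}`. -/
theorem Qclass_mul (α₁ β₁ α₂ β₂ : ℝ) (hαβ₁ : α₁ ≤ β₁) (hαβ₂ : α₂ ≤ β₂)
    (f₁ f₂ : ℝ → ℝ) (h₁ : f₁ ∈ Qclass α₁ β₁) (h₂ : f₂ ∈ Qclass α₂ β₂) :
    (fun t => f₁ t * f₂ t) ∈ Qclass (α₁ + α₂) (min (α₁ + β₂) (α₂ + β₁)) := by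
  intro γ'
  obtain ⟨p₁, hp₁, r₁, hr₁, hf₁⟩ := h₁ (max (γ' - α₂) γ')
  obtain ⟨p₂, hp₂, r₂, hr₂, hf₂⟩ := h₂ (max (γ' - α₁) 0)
  obtain ⟨n₁, a₁, e₁, hi₁, hni₁, hrep₁⟩ := hp₁
  obtain ⟨n₂, a₂, e₂, hi₂, hni₂, hrep₂⟩ := hp₂
  have he₁ : ∀ i, α₁ < e₁ i := by
    intro i
    by_cases h : ∃ z : ℤ, e₁ i = (z:ℝ)
    · exact hi₁ i h
    · exact lt_of_le_of_lt hαβ₁ (hni₁ i h)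
  have he₂ : ∀ j, α₂ < e₂ j := by
    intro j
    by_cases h : ∃ z : ℤ, e₂ j = (z:ℝ)
    · exact hi₂ j h
    · exact lt_of_le_of_lt hαβ₂ (hni₂ j h)
  refine ⟨fun t => ∑ i, ∑ j, (a₁ i * a₂ j) * t ^ (e₁ i + e₂ j), ?_,
    fun t => (∑ i, a₁ i * t ^ (e₁ i)) * r₂ t
      + (r₁ t * (∑ j, a₂ j * t ^ (e₂ j)) + r₁ t * r₂ t), ?_, ?_⟩
  · -- P membership
    refine ⟨n₁ * n₂,
      fun k => a₁ (finProdFinEquiv.symm k).1 * a₂ (finProdFinEquiv.symm k).2,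
      fun k => e₁ (finProdFinEquiv.symm k).1 + e₂ (finProdFinEquiv.symm k).2, ?_, ?_, ?_⟩
    · rintro k ⟨z, hz⟩
      set i := (finProdFinEquiv.symm k).1
      set j := (finProdFinEquiv.symm k).2
      replace hz : e₁ i + e₂ j = (z:ℝ) := hz
      show α₁ + α₂ < e₁ i + e₂ j
      by_cases h1 : ∃ z₁ : ℤ, e₁ i = (z₁:ℝ)
      · obtain ⟨z₁, hz₁⟩ := h1
        have h2 : ∃ z₂ : ℤ, e₂ j = (z₂:ℝ) := ⟨z - z₁, by push_cast; linarith⟩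
        have := hi₁ i ⟨z₁, hz₁⟩
        have := hi₂ j h2
        linarith
      · have h2 : ¬ ∃ z₂ : ℤ, e₂ j = (z₂:ℝ) := by
          rintro ⟨z₂, hz₂⟩
          exact h1 ⟨z - z₂, by push_cast; linarith⟩
        have := hni₁ i h1
        have := hni₂ j h2
        linarith
    · intro k hk
      set i := (finProdFinEquiv.symm k).1
      set j := (finProdFinEquiv.symm k).2
      replace hk : ¬∃ z : ℤ, e₁ i + e₂ j = (z:ℝ) := hk
      show min (α₁ + β₂) (α₂ + β₁) < e₁ i + e₂ j
      by_cases h1 : ∃ z₁ : ℤ, e₁ i = (z₁:ℝ)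
      · obtain ⟨z₁, hz₁⟩ := h1
        have h2 : ¬ ∃ z₂ : ℤ, e₂ j = (z₂:ℝ) := by
          rintro ⟨z₂, hz₂⟩
          exact hk ⟨z₁ + z₂, by push_cast; linarith⟩
        have ha := hi₁ i ⟨z₁, hz₁⟩
        have hb := hni₂ j h2
        exact lt_of_le_of_lt (min_le_left _ _) (by linarith)
      · have ha := hni₁ i h1
        have hb := he₂ j
        exact lt_of_le_of_lt (min_le_right _ _) (by linarith)
    · intro t ht
      have h := Equiv.sum_comp finProdFinEquiv.symm
        (fun ij : Fin n₁ × Fin n₂ => (a₁ ij.1 * a₂ ij.2) * t ^ (e₁ ij.1 + e₂ ij.2))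
      have h2 := Fintype.sum_prod_type
        (f := fun ij : Fin n₁ × Fin n₂ => (a₁ ij.1 * a₂ ij.2) * t ^ (e₁ ij.1 + e₂ ij.2))
      exact h2.symm.trans h.symm
  · -- R membership
    have hq1r2 : (fun t => (∑ i, a₁ i * t ^ (e₁ i)) * r₂ t) ∈ Rclass γ' := by
      have hrw : (fun t => (∑ i, a₁ i * t ^ (e₁ i)) * r₂ t)
          = fun t => ∑ i : Fin n₁, (a₁ i * t ^ (e₁ i) * r₂ t) := by
        funext t; rw [Finset.sum_mul]
      rw [hrw]
      refine Rclass_sum _ _ fun i _ => ?_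
      refine Rclass_mono ?_ (Rclass_mul (single_mem_Rclass (a₁ i) (e₁ i)) hr₂)
      have := le_max_left (γ' - α₁) 0
      have := he₁ i
      linarith
    have hr1q2 : (fun t => r₁ t * (∑ j, a₂ j * t ^ (e₂ j))) ∈ Rclass γ' := by
      have hrw : (fun t => r₁ t * (∑ j, a₂ j * t ^ (e₂ j)))
          = fun t => ∑ j : Fin n₂, (r₁ t * (a₂ j * t ^ (e₂ j))) := by
        funext t; rw [Finset.mul_sum]
      rw [hrw]
      refine Rclass_sum _ _ fun j _ => ?_
      refine Rclass_mono ?_ (Rclass_mul hr₁ (single_mem_Rclass (a₂ j) (e₂ j)))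
      have := le_max_left (γ' - α₂) γ'
      have := he₂ j
      linarith
    have hr1r2 : (fun t => r₁ t * r₂ t) ∈ Rclass γ' := by
      refine Rclass_mono ?_ (Rclass_mul hr₁ hr₂)
      have := le_max_right (γ' - α₂) γ'
      have := le_max_right (γ' - α₁) 0
      linarith
    exact Rclass_add hq1r2 (Rclass_add hr1q2 hr1r2)
  · -- equality on (0,2)
    intro t ht
    have h1 := hf₁ t ht
    have h2 := hf₂ t ht
    have hq1 := hrep₁ t ht
    have hq2 := hrep₂ t ht
    have hpt : (∑ i, ∑ j, (a₁ i * a₂ j) * t ^ (e₁ i + e₂ j))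
        = (∑ i, a₁ i * t ^ (e₁ i)) * (∑ j, a₂ j * t ^ (e₂ j)) := by
      rw [Finset.sum_mul]
      refine Finset.sum_congr rfl fun i _ => ?_
      rw [Finset.mul_sum]
      refine Finset.sum_congr rfl fun j _ => ?_
      rw [Real.rpow_add ht.1]; ring
    simp only
    rw [h1, h2, hq1, hq2, hpt]
    ring
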